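/- For X ∈ so(3), the matrix exponential exp(X) equals the identity if and only if ‖v_X‖ ∈ 2πℤ, where v_X ∈ ℝ³ is the vector with X·w = v_X × w for all w ∈ ℝ³. -/

import Mathlib

open Matrix Real

/-- For `X ∈ so(3)` with associated vector `v_X` (so `X·w = v_X × w`),
the matrix exponential `exp X` equals the identity iff `‖v_X‖ ∈ 2πℤ`. -/
theorem stmt_1 (X : Matrix (Fin 3) (Fin 3) ℝ) (hskew : Xᵀ = -X)
    (v : Fin 3 → ℝ) (hv : ∀ w : Fin 3 → ℝ, X.mulVec w = crossProduct v w) :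
    NormedSpace.exp X = (1 : Matrix (Fin 3) (Fin 3) ℝ) ↔
      ∃ k : ℤ, Real.sqrt (v ⬝ᵥ v) = 2 * Real.pi * k := by
  have hXe : X = !![0, -v 2, v 1; v 2, 0, -v 0; -v 1, v 0, 0] := by
    ext i j
    have h := congrFun (hv (Pi.single j 1)) i
    rw [Matrix.mulVec_single] at h
    fin_cases i <;> fin_cases j <;>
      simp [crossProduct, Pi.single_apply] at h ⊢ <;> linarith
  set r : ℝ := v ⬝ᵥ v with hr
  have hrv : r = v 0 * v 0 + v 1 * v 1 + v 2 * v 2 := by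
    simp [hr, dotProduct, Fin.sum_univ_three]
  have hrnn : 0 ≤ r := by nlinarith [sq_nonneg (v 0), sq_nonneg (v 1), sq_nonneg (v 2)]
  rcases eq_or_lt_of_le hrnn with hr0 | hrpos
  · -- v = 0 case
    have h0 : v 0 = 0 ∧ v 1 = 0 ∧ v 2 = 0 := by
      refine ⟨?_, ?_, ?_⟩ <;> nlinarith [sq_nonneg (v 0), sq_nonneg (v 1), sq_nonneg (v 2)]
    have hX0 : X = 0 := by
      rw [hXe, h0.1, h0.2.1, h0.2.2]; ext i j; fin_cases i <;> fin_cases j <;> simp [Matrix.vecHead, Matrix.vecTail]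
    constructor
    · intro _; exact ⟨0, by simp [← hr0]⟩
    · intro _; rw [hX0]; exact NormedSpace.exp_zero
  · -- main case
    set θ : ℝ := Real.sqrt r with hθ
    have hθpos : 0 < θ := Real.sqrt_pos.mpr hrpos
    have hθ2 : θ ^ 2 = r := Real.sq_sqrt hrnn
    have hθne : θ ≠ 0 := ne_of_gt hθpos
    have hX3 : X ^ 3 = (-r) • X := by
      rw [hXe, hrv]
      ext i j
      fin_cases i <;> fin_cases j <;>
        simp [pow_succ, Matrix.mul_apply, Fin.sum_univ_three] <;> ring
    have hodd : ∀ k : ℕ, X ^ (2 * k + 1) = ((-r) ^ k) • X := by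
      intro k
      induction k with
      | zero => simp
      | succ n ih =>
        have : 2 * (n + 1) + 1 = (2 * n + 1) + 2 := by ring
        rw [this, pow_add, ih, Matrix.smul_mul]
        have h2 : X * X ^ 2 = X ^ 3 := (pow_succ' X 2).symm
        rw [h2, hX3, smul_smul, pow_succ]
    have heven : ∀ k : ℕ, X ^ (2 * k + 2) = ((-r) ^ k) • X ^ 2 := by
      intro k
      have h1 : 2 * k + 2 = (2 * k + 1) + 1 := by ring
      rw [h1, pow_succ, hodd, Matrix.smul_mul, ← sq]
    have hfac : ∀ n : ℕ, ((n.factorial : ℝ)) ≠ 0 := fun n => Nat.cast_ne_zero.mpr n.factorial_ne_zero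
    set A : ℝ := Real.sin θ / θ with hA
    set B : ℝ := (1 - Real.cos θ) / θ ^ 2 with hB
    have hsum : HasSum (fun n : ℕ => ((n.factorial : ℝ)⁻¹) • X ^ n)
        ((1 + B • X ^ 2) + A • X) := by
      refine HasSum.even_add_odd ?_ ?_
      · have hc1 : HasSum
            (fun n : ℕ => (-1 : ℝ) ^ (n + 1) * θ ^ (2 * (n + 1)) / ((2 * (n + 1)).factorial))
            (Real.cos θ - 1) := by
          have h := (hasSum_nat_add_iff'
            (f := fun n : ℕ => (-1 : ℝ) ^ n * θ ^ (2 * n) / ((2 * n).factorial)) 1).mpr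
            (Real.hasSum_cos θ)
          simpa using h
        have hc2 := (hc1.mul_left (-(θ ^ 2)⁻¹)).smul_const (X ^ 2)
        have hval : -(θ ^ 2)⁻¹ * (Real.cos θ - 1) = B := by
          rw [hB]; field_simp; ring
        rw [hval] at hc2
        have hc3 : HasSum
            (fun n : ℕ => ((((2 * (n + 1)).factorial : ℝ))⁻¹) • X ^ (2 * (n + 1)))
            (B • X ^ 2) := by
          convert hc2 using 1
          funext n
          have h2 : 2 * (n + 1) = 2 * n + 2 := by ring
          rw [h2, heven n, smul_smul]
          congr 1
          have hth : θ ^ (2 * n + 2) = (θ ^ 2) ^ (n + 1) := by rw [← pow_mul, show 2 * (n + 1) = 2 * n + 2 from by omega]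
          rw [hth, hθ2, neg_pow]
          have := hfac (2 * n + 2)
          field_simp
          ring
        have hz := HasSum.zero_add
          (f := fun k : ℕ => ((((2 * k).factorial : ℝ))⁻¹) • X ^ (2 * k)) hc3
        simpa using hz
      · have hs2 := ((Real.hasSum_sin θ).div_const θ).smul_const X
        convert hs2 using 1
        funext k
        rw [hodd k, smul_smul]
        congr 1
        have hth : θ ^ (2 * k + 1) = (θ ^ 2) ^ k * θ := by
          rw [pow_succ, pow_mul]
        rw [hth, hθ2, neg_pow]
        have := hfac (2 * k + 1)
        field_simp
    have hRod : NormedSpace.exp X = (1 + B • X ^ 2) + A • X := by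
      rw [NormedSpace.exp_eq_tsum (𝕂 := ℝ)]
      exact hsum.tsum_eq
    have hX2T : (X ^ 2)ᵀ = X ^ 2 := by
      rw [sq, Matrix.transpose_mul, hskew]
      simp [← sq]
    have htr : Matrix.trace (X ^ 2) = -(2 * r) := by
      rw [hXe, hrv]
      simp [Matrix.trace, sq, Matrix.mul_apply, Fin.sum_univ_three, Matrix.diag]
      ring
    have hX2ne : X ^ 2 ≠ 0 := by
      intro h0
      rw [h0] at htr
      simp at htr
      nlinarith
    constructor
    · intro hexp
      have h2 : (1 + B • X ^ 2) + A • X = 1 := by rw [← hRod]; exact hexp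
      have h3 : B • X ^ 2 + A • X = 0 := by
        have h4 : (1 : Matrix (Fin 3) (Fin 3) ℝ) + (B • X ^ 2 + A • X) = 1 + 0 := by
          rw [← add_assoc, add_zero]; exact h2
        exact add_left_cancel h4
      have h4 := congrArg Matrix.transpose h3
      simp only [Matrix.transpose_add, Matrix.transpose_smul, hX2T, hskew,
        Matrix.transpose_zero, smul_neg] at h4
      have hQ : B • X ^ 2 = -(A • X) := eq_neg_of_add_eq_zero_left h3
      have hQ' : B • X ^ 2 = A • X := by simpa using eq_neg_of_add_eq_zero_left h4
      have h7 : B • X ^ 2 = -(B • X ^ 2) := by rw [← hQ'] at hQ; exact hQ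
      have h8 : (2 : ℝ) • (B • X ^ 2) = 0 := by
        rw [two_smul]
        nth_rewrite 2 [h7]
        simp
      have hB0 : B = 0 := by
        rcases smul_eq_zero.mp h8 with h | h
        · norm_num at h
        · rcases smul_eq_zero.mp h with h' | h'
          · exact h'
          · exact absurd h' hX2ne
      have hcos : Real.cos θ = 1 := by
        rw [hB] at hB0
        rcases div_eq_zero_iff.mp hB0 with h | h
        · linarith
        · exact absurd h (pow_ne_zero 2 hθne)
      obtain ⟨n, hn⟩ := (Real.cos_eq_one_iff θ).mp hcos
      exact ⟨n, by rw [← hn]; ring⟩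
    · rintro ⟨k, hk⟩
      have hcos : Real.cos θ = 1 := by
        rw [hk, show 2 * Real.pi * (k : ℝ) = (k : ℝ) * (2 * Real.pi) from by ring]
        exact Real.cos_int_mul_two_pi k
      have hsin : Real.sin θ = 0 := by
        rw [hk, show 2 * Real.pi * (k : ℝ) = ((2 * k : ℤ) : ℝ) * Real.pi from by push_cast; ring]
        exact Real.sin_int_mul_pi (2 * k)
      rw [hRod, hA, hB, hsin, hcos]
      simp
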